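/- Let p ≥ 2 and a, b real numbers with |a| ≥ |b-a| and |a-b| ≤ 1. Then (|a|^{p-2}a - |b|^{p-2}b)(a-b) ≥ |a-b|^p / (p-1). -/
import Mathlib

private lemma rpow_split (x q : ℝ) (hx : 0 ≤ x) (hq : 0 < q) :
    x ^ (q + 1) = x ^ q * x := by
  rcases eq_or_lt_of_le hx with h0 | h0
  · rw [← h0, Real.zero_rpow (by linarith), Real.zero_rpow (by linarith), mul_zero]
  · rw [Real.rpow_add h0, Real.rpow_one]

private lemma rpow_mul_self (p x : ℝ) (hp : 2 ≤ p) (hx : 0 ≤ x) :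
    x ^ (p - 2) * x = x ^ (p - 1) := by
  rcases eq_or_lt_of_le hp with h2 | h2
  · rw [← h2]; norm_num [Real.rpow_one]
  · rw [show p - 1 = (p - 2) + 1 by ring, rpow_split x (p - 2) hx (by linarith)]

private lemma superadd {q x y : ℝ} (hq : 1 ≤ q) (hx : 0 ≤ x) (hy : 0 ≤ y) :
    x ^ q + y ^ q ≤ (x + y) ^ q := by
  have h := NNReal.add_rpow_le_rpow_add x.toNNReal y.toNNReal hq
  have h2 := NNReal.coe_le_coe.2 h
  rw [NNReal.coe_add] at h2
  simp only [NNReal.coe_rpow] at h2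
  rwa [Real.coe_toNNReal x hx, Real.coe_toNNReal y hy, ← Real.toNNReal_add hx hy,
    Real.coe_toNNReal _ (by linarith)] at h2

private lemma key (p a b : ℝ) (hp : 2 ≤ p) (ha : 0 ≤ a) (hb : 0 ≤ b) :
    |a - b| ^ p ≤ (a ^ (p - 1) - b ^ (p - 1)) * (a - b) := by
  wlog hba : b ≤ a generalizing a b
  · have := this b a hb ha (by linarith)
    calc |a - b| ^ p = |b - a| ^ p := by rw [abs_sub_comm]
      _ ≤ (b ^ (p - 1) - a ^ (p - 1)) * (b - a) := this
      _ = (a ^ (p - 1) - b ^ (p - 1)) * (a - b) := by ring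
  have hd : 0 ≤ a - b := by linarith
  rw [abs_of_nonneg hd]
  have h1 : (a - b) ^ p = (a - b) ^ (p - 1) * (a - b) := by
    rw [show p = (p - 1) + 1 by ring, rpow_split (a - b) (p - 1) hd (by linarith)]
    ring_nf
  rw [h1]
  apply mul_le_mul_of_nonneg_right _ hd
  have := superadd (x := a - b) (y := b) (by linarith : 1 ≤ p - 1) hd hb
  have h2 : a - b + b = a := by ring
  rw [h2] at this
  linarith

theorem stmt_5 (p a b : ℝ) (hp : 2 ≤ p) (h : |b - a| ≤ |a|) (hab : |a - b| ≤ 1) :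
    |a - b| ^ p / (p - 1) ≤ (|a| ^ (p - 2) * a - |b| ^ (p - 2) * b) * (a - b) := by
  have hpow : (0:ℝ) ≤ |a - b| ^ p := Real.rpow_nonneg (abs_nonneg _) p
  have hdiv : |a - b| ^ p / (p - 1) ≤ |a - b| ^ p :=
    div_le_self hpow (by linarith)
  refine hdiv.trans ?_
  rcases le_total 0 a with ha | ha
  · have hb : 0 ≤ b := by
      have := abs_le.mp h
      rw [abs_of_nonneg ha] at this
      linarith [this.1]
    rw [abs_of_nonneg ha, abs_of_nonneg hb,
      rpow_mul_self p a hp ha, rpow_mul_self p b hp hb]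
    exact key p a b hp ha hb
  · have hb : b ≤ 0 := by
      have := abs_le.mp h
      rw [abs_of_nonpos ha] at this
      linarith [this.2]
    have := key p (-a) (-b) hp (by linarith) (by linarith)
    have habs : |a - b| = |(-a) - (-b)| := by rw [← abs_neg]; ring_nf
    rw [habs]
    calc |(-a) - (-b)| ^ p ≤ ((-a) ^ (p - 1) - (-b) ^ (p - 1)) * ((-a) - (-b)) := this
      _ = (|a| ^ (p - 2) * a - |b| ^ (p - 2) * b) * (a - b) := by
          rw [abs_of_nonpos ha, abs_of_nonpos hb,
            ← rpow_mul_self p (-a) hp (by linarith), ← rpow_mul_self p (-b) hp (by linarith)]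
          ring
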